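/- If a sequence of real numbers (r_n) contains infinitely many terms strictly above a dyadic rational r and infinitely many terms strictly below r, and converges classically to r, then the s-limit of the sign expansions equals the sign expansion of r itself. -/

import Mathlib

open scoped Classical

noncomputable def slim {L M A : Type*} [LinearOrder L] [LinearOrder M]
    (a : L → M → Option A) : M → Option A := fun m =>
  if h : ∃ l0 : L, ∀ m' ≤ m, ∀ l, l0 ≤ l → ∀ l', l0 ≤ l' →
      a l m' = a l' m' ∧ (a l m').isSome
  then a h.choose m else none

noncomputable def slimIio {A : Type*} (α : Ordinal) (s : Ordinal → Ordinal → Option A) :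
    Ordinal → Option A :=
  slim (L := Set.Iio α) (fun β => s β.1)

abbrev SignStr := Ordinal → Option Bool

def signVal : Option Bool → ℕ
  | none => 1
  | some false => 0
  | some true => 2

def strLT (s t : SignStr) : Prop :=
  ∃ γ, (∀ β < γ, s β = t β) ∧ signVal (s γ) < signVal (t γ)

def strLE (s t : SignStr) : Prop := s = t ∨ strLT s t

noncomputable def ordStr (α : Ordinal) : SignStr := fun γ => if γ < α then some true else none

noncomputable def strLength {A : Type*} (a : Ordinal → Option A) : Ordinal :=
  sInf {γ | a γ = none}

noncomputable def strAppend {A : Type*} (a b : Ordinal → Option A) : Ordinal → Option A :=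
  fun γ => if γ < strLength a then a γ else b (γ - strLength a)

noncomputable def oneOverOmega : SignStr := fun γ =>
  if γ = 0 then some true else if γ < Ordinal.omega0 then some false else none

noncomputable def negOneOverOmega : SignStr := fun γ =>
  if γ = 0 then some false else if γ < Ordinal.omega0 then some true else none

def IsDyadic (x : ℝ) : Prop := ∃ (k : ℤ) (m : ℕ), x = k / 2 ^ m

noncomputable def cand : Option ℝ × Option ℝ → ℝ
  | (none, none) => 0
  | (some l, none) => l + 1
  | (none, some u) => u - 1
  | (some l, some u) => (l + u) / 2

noncomputable def signState (r : ℝ) : ℕ → Option ℝ × Option ℝ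
  | 0 => (none, none)
  | n + 1 =>
      let st := signState r n
      let c := cand st
      if c < r then (some c, st.2)
      else if r < c then (st.1, some c)
      else st

noncomputable def signAt (r : ℝ) (n : ℕ) : Option Bool :=
  let c := cand (signState r n)
  if c < r then some true else if r < c then some false else none

noncomputable def signExp (r : ℝ) : SignStr := fun γ =>
  if h : ∃ n : ℕ, γ = (n : Ordinal) then signAt r h.choose else none

section Aux
variable {x y : ℝ}

lemma signState_succ (x : ℝ) (n : ℕ) : signState x (n+1) =
    if cand (signState x n) < x then (some (cand (signState x n)), (signState x n).2)
    else if x < cand (signState x n) then ((signState x n).1, some (cand (signState x n)))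
    else signState x n := rfl

lemma signAt_eq (y : ℝ) (m : ℕ) : signAt y m =
    if cand (signState y m) < y then some true
    else if y < cand (signState y m) then some false else none := rfl

lemma signExp_natCast (x : ℝ) (n : ℕ) : signExp x (n : Ordinal) = signAt x n := by
  unfold signExp
  have h : ∃ m : ℕ, (n : Ordinal) = (m : Ordinal) := ⟨n, rfl⟩
  rw [dif_pos h]
  have : h.choose = n := by
    have := h.choose_spec
    exact_mod_cast this.symm
  rw [this]

lemma signExp_of_omega_le (x : ℝ) {γ : Ordinal} (h : Ordinal.omega0 ≤ γ) :
    signExp x γ = none := by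
  unfold signExp
  rw [dif_neg]
  rintro ⟨n, rfl⟩
  exact absurd (Ordinal.nat_lt_omega0 n) (not_lt.mpr h)

/-- The invariant satisfied by all states. -/
def SInv (x : ℝ) : Option ℝ × Option ℝ → Prop
  | (none, none) => True
  | (some l, none) => l < x ∧ ∃ k : ℕ, l = (k : ℝ)
  | (none, some u) => x < u ∧ ∃ k : ℕ, u = -(k : ℝ)
  | (some l, some u) => l < x ∧ x < u ∧
      ∃ (j : ℕ) (k : ℤ), l = (k : ℝ) / 2 ^ j ∧ u = ((k : ℝ) + 1) / 2 ^ j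

lemma sInv (x : ℝ) : ∀ n, SInv x (signState x n) := by
  intro n
  induction n with
  | zero => trivial
  | succ n ih =>
    rw [signState_succ]
    rcases hst : signState x n with ⟨l?, u?⟩
    rw [hst] at ih
    match l?, u? with
    | none, none =>
      have hc : cand (none, none) = 0 := rfl
      rw [hc]
      rcases lt_trichotomy (0:ℝ) x with h | h | h
      · rw [if_pos h]; exact ⟨h, 0, by norm_num⟩
      · rw [if_neg (by linarith), if_neg (by linarith)]; trivial
      · rw [if_neg (by linarith), if_pos h]; exact ⟨h, 0, by norm_num⟩
    | some l, none =>
      obtain ⟨hl, k, hk⟩ := ih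
      have hc : cand (some l, none) = l + 1 := rfl
      rw [hc]
      rcases lt_trichotomy (l + 1) x with h | h | h
      · rw [if_pos h]; exact ⟨h, k + 1, by push_cast [hk]; ring⟩
      · rw [if_neg (by linarith), if_neg (by linarith)]; exact ⟨hl, k, hk⟩
      · rw [if_neg (by linarith), if_pos h]
        refine ⟨hl, h, 0, (k : ℤ), by push_cast [hk]; ring, by push_cast [hk]; ring⟩
    | none, some u =>
      obtain ⟨hu, k, hk⟩ := ih
      have hc : cand (none, some u) = u - 1 := rfl
      rw [hc]
      rcases lt_trichotomy (u - 1) x with h | h | h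
      · rw [if_pos h]
        refine ⟨h, hu, 0, -(k : ℤ) - 1, by push_cast [hk]; ring, by push_cast [hk]; ring⟩
      · rw [if_neg (by linarith), if_neg (by linarith)]; exact ⟨hu, k, hk⟩
      · rw [if_neg (by linarith), if_pos h]; exact ⟨h, k + 1, by push_cast [hk]; ring⟩
    | some l, some u =>
      obtain ⟨hl, hu, j, k, hkl, hku⟩ := ih
      have hc : cand (some l, some u) = (l + u) / 2 := rfl
      rw [hc]
      have h2 : (0:ℝ) < 2 ^ j := by positivity
      have hmid : (l + u) / 2 = ((2 * k + 1 : ℤ) : ℝ) / 2 ^ (j + 1) := by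
        rw [hkl, hku]; push_cast; field_simp; ring
      rcases lt_trichotomy ((l + u) / 2) x with h | h | h
      · rw [if_pos h]
        refine ⟨h, hu, j + 1, 2 * k + 1, by exact_mod_cast hmid, ?_⟩
        rw [hku]; push_cast; field_simp; ring
      · rw [if_neg (by linarith), if_neg (by linarith)]; exact ⟨hl, hu, j, k, hkl, hku⟩
      · rw [if_neg (by linarith), if_pos h]
        refine ⟨hl, h, j + 1, 2 * k, ?_, ?_⟩
        · rw [hkl]; push_cast; field_simp; ring
        · rw [hmid]; push_cast; ring

end Aux

section Term

lemma signState_terminates (x : ℝ) (hx : IsDyadic x) :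
    ∃ n, cand (signState x n) = x := by
  by_contra hnever
  push_neg at hnever
  -- Step A: the process eventually reaches a two-sided state
  have two : ∃ n l u, signState x n = (some l, some u) := by
    rcases lt_trichotomy x 0 with hx0 | hx0 | hx0
    · by_contra htwo
      push_neg at htwo
      have key : ∀ n : ℕ, signState x (n+1) = (none, some (-(n : ℝ))) := by
        intro n
        induction n with
        | zero =>
          rw [signState_succ]
          have hc : cand (signState x 0) = 0 := rfl
          rw [hc, if_neg (by linarith), if_pos hx0]
          simp [signState]
        | succ n ih =>
          have hc : cand (signState x (n+1)) = -(n:ℝ) - 1 := by rw [ih]; rfl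
          rcases lt_trichotomy (-(n:ℝ) - 1) x with h | h | h
          · exact absurd (by rw [signState_succ, hc, if_pos h, ih] :
              signState x ((n+1)+1) = (some (-(n:ℝ)-1), some (-(n:ℝ))))
              (htwo ((n+1)+1) (-(n:ℝ)-1) (-(n:ℝ)))
          · exact absurd (hc.trans h) (hnever (n+1))
          · rw [signState_succ, hc, if_neg (by linarith), if_pos h, ih]
            have e : -(n:ℝ) - 1 = -(((n+1:ℕ)) : ℝ) := by push_cast; ring
            rw [e]
      obtain ⟨n, hn⟩ := exists_nat_gt (-x)
      have h2 := sInv x (n+1)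
      rw [key n] at h2
      have : x < -(n:ℝ) := h2.1
      linarith
    · refine (hnever 0 ?_).elim
      rw [show cand (signState x 0) = (0:ℝ) from rfl]
      exact hx0.symm
    · by_contra htwo
      push_neg at htwo
      have key : ∀ n : ℕ, signState x (n+1) = (some (n : ℝ), none) := by
        intro n
        induction n with
        | zero =>
          rw [signState_succ]
          have hc : cand (signState x 0) = 0 := rfl
          rw [hc, if_pos hx0]
          simp [signState]
        | succ n ih =>
          have hc : cand (signState x (n+1)) = (n:ℝ) + 1 := by rw [ih]; rfl
          rcases lt_trichotomy ((n:ℝ) + 1) x with h | h | h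
          · rw [signState_succ, hc, if_pos h, ih]
            have e : (n:ℝ) + 1 = (((n+1:ℕ)) : ℝ) := by push_cast; ring
            rw [e]
          · exact absurd (hc.trans h) (hnever (n+1))
          · exact absurd (by rw [signState_succ, hc, if_neg (by linarith), if_pos h, ih] :
              signState x ((n+1)+1) = (some (n:ℝ), some ((n:ℝ)+1)))
              (htwo ((n+1)+1) (n:ℝ) ((n:ℝ)+1))
      obtain ⟨n, hn⟩ := exists_nat_gt x
      have h2 := sInv x (n+1)
      rw [key n] at h2
      have : (n:ℝ) < x := h2.1
      linarith
  -- Step B: once two-sided, the interval halves forever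
  obtain ⟨n0, l0, u0, hst⟩ := two
  have hi := sInv x n0
  rw [hst] at hi
  obtain ⟨hl0, hu0, j0, k0, hkl0, hku0⟩ := hi
  have grow : ∀ i, ∃ k : ℤ,
      signState x (n0 + i) = (some ((k:ℝ)/2^(j0+i)), some (((k:ℝ)+1)/2^(j0+i))) ∧
      (k:ℝ)/2^(j0+i) < x ∧ x < ((k:ℝ)+1)/2^(j0+i) := by
    intro i
    induction i with
    | zero =>
      simp only [Nat.add_zero]
      refine ⟨k0, ?_, ?_, ?_⟩
      · rw [hst, hkl0, hku0]
      · rw [← hkl0]; exact hl0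
      · rw [← hku0]; exact hu0
    | succ i ih =>
      obtain ⟨k, hsk, hkl, hku⟩ := ih
      have h2 : (0:ℝ) < 2^(j0+i) := by positivity
      have hE : n0 + (i+1) = (n0 + i) + 1 := rfl
      have hJ : j0 + (i+1) = (j0 + i) + 1 := rfl
      have hc : cand (signState x (n0+i)) = (2*(k:ℝ)+1) / 2^((j0+i)+1) := by
        rw [hsk]
        show ((k:ℝ)/2^(j0+i) + ((k:ℝ)+1)/2^(j0+i)) / 2 = _
        rw [pow_succ]; field_simp; ring
      have e1 : ((2*k+1:ℤ):ℝ)/2^((j0+i)+1) = (2*(k:ℝ)+1)/2^((j0+i)+1) := by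
        push_cast; ring
      have e2 : (((2*k+1:ℤ):ℝ)+1)/2^((j0+i)+1) = ((k:ℝ)+1)/2^(j0+i) := by
        push_cast; rw [pow_succ]; field_simp; ring
      have f1 : ((2*k:ℤ):ℝ)/2^((j0+i)+1) = (k:ℝ)/2^(j0+i) := by
        push_cast; rw [pow_succ]; field_simp
      have f2 : (((2*k:ℤ):ℝ)+1)/2^((j0+i)+1) = (2*(k:ℝ)+1)/2^((j0+i)+1) := by
        push_cast; ring
      rcases lt_trichotomy ((2*(k:ℝ)+1) / 2^((j0+i)+1)) x with h | h | h
      · have hnew : signState x ((n0+i)+1)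
            = (some ((2*(k:ℝ)+1)/2^((j0+i)+1)), some (((k:ℝ)+1)/2^(j0+i))) := by
          rw [signState_succ, hc, if_pos h, hsk]
        refine ⟨2*k+1, ?_, ?_, ?_⟩
        · rw [hE, hJ, hnew, e1, e2]
        · rw [hJ, e1]; exact h
        · rw [hJ, e2]; exact hku
      · exact absurd (hc.trans h) (hnever (n0+i))
      · have hnew : signState x ((n0+i)+1)
            = (some ((k:ℝ)/2^(j0+i)), some ((2*(k:ℝ)+1)/2^((j0+i)+1))) := by
          rw [signState_succ, hc, if_neg (by linarith), if_pos h, hsk]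
        refine ⟨2*k, ?_, ?_, ?_⟩
        · rw [hE, hJ, hnew, f1, f2]
        · rw [hJ, f1]; exact hkl
        · rw [hJ, f2]; exact h
  -- Step C: contradiction with dyadicity
  obtain ⟨kk, mm, hxeq⟩ := hx
  obtain ⟨k, _, hkl, hku⟩ := grow mm
  set J := j0 + mm with hJ
  have hmJ : mm ≤ J := Nat.le_add_left mm j0
  have h2J : (0:ℝ) < 2^J := by positivity
  set K : ℤ := kk * 2^(J - mm) with hKdef
  have hx2 : x = (K : ℝ) / 2^J := by
    rw [hxeq, hKdef]
    push_cast
    rw [show (2:ℝ)^J = 2^mm * 2^(J-mm) from by rw [← pow_add, Nat.add_sub_cancel' hmJ]]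
    have hp1 : (0:ℝ) < 2^mm := by positivity
    have hp2 : (0:ℝ) < 2^(J-mm) := by positivity
    field_simp
  rw [hx2] at hkl hku
  have h1' : k < K := by
    have := (div_lt_div_iff_of_pos_right h2J).mp hkl
    exact_mod_cast this
  have h2' : K < k + 1 := by
    have := (div_lt_div_iff_of_pos_right h2J).mp hku
    exact_mod_cast this
  omega

end Term

section Cont

lemma signState_freeze {x : ℝ} {n : ℕ} (h : cand (signState x n) = x) :
    ∀ m, n ≤ m → signState x m = signState x n := by
  intro m hm
  induction m, hm using Nat.le_induction with
  | base => rfl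
  | succ m hm ih =>
    rw [signState_succ, ih, h, if_neg (lt_irrefl x), if_neg (lt_irrefl x)]

lemma signAt_none_of_freeze {x : ℝ} {n m : ℕ} (h : cand (signState x n) = x)
    (hm : n ≤ m) : signAt x m = none := by
  rw [signAt_eq, signState_freeze h m hm, h, if_neg (lt_irrefl x), if_neg (lt_irrefl x)]

lemma signAt_isSome_of_ne {x : ℝ} {m : ℕ} (h : cand (signState x m) ≠ x) :
    (signAt x m).isSome := by
  rw [signAt_eq]
  rcases lt_trichotomy (cand (signState x m)) x with hc | hc | hc
  · rw [if_pos hc]; rfl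
  · exact absurd hc h
  · rw [if_neg (not_lt.mpr hc.le), if_pos hc]; rfl

lemma signState_close (x y : ℝ) (N : ℕ)
    (h : ∀ m < N, |y - x| < |cand (signState x m) - x|) :
    ∀ m ≤ N, signState y m = signState x m := by
  intro m hm
  induction m with
  | zero => rfl
  | succ m ih =>
    have hmN : m < N := hm
    have hst := ih (le_of_lt hm)
    have hy := h m hmN
    rw [signState_succ, signState_succ, hst]
    rcases lt_trichotomy (cand (signState x m)) x with hc | hc | hc
    · have habs : |cand (signState x m) - x| = x - cand (signState x m) := by
        rw [abs_sub_comm]; exact abs_of_pos (by linarith)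
      have h1 : |y - x| < x - cand (signState x m) := habs ▸ hy
      have hcy : cand (signState x m) < y := by
        have := (abs_lt.mp h1).1; linarith
      rw [if_pos hc, if_pos hcy]
    · exfalso; rw [hc, sub_self, abs_zero] at hy; linarith [abs_nonneg (y - x)]
    · have habs : |cand (signState x m) - x| = cand (signState x m) - x :=
        abs_of_pos (by linarith)
      have h1 : |y - x| < cand (signState x m) - x := habs ▸ hy
      have hyc : y < cand (signState x m) := by
        have := (abs_lt.mp h1).2; linarith
      rw [if_neg (not_lt.mpr hyc.le), if_pos hyc, if_neg (not_lt.mpr hc.le), if_pos hc]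

lemma signAt_close (x y : ℝ) (N : ℕ)
    (h : ∀ m < N, |y - x| < |cand (signState x m) - x|) :
    ∀ m < N, signAt y m = signAt x m := by
  intro m hm
  have hy := h m hm
  rw [signAt_eq, signAt_eq, signState_close x y N h m hm.le]
  rcases lt_trichotomy (cand (signState x m)) x with hc | hc | hc
  · have habs : |cand (signState x m) - x| = x - cand (signState x m) := by
      rw [abs_sub_comm]; exact abs_of_pos (by linarith)
    have h1 : |y - x| < x - cand (signState x m) := habs ▸ hy
    have hcy : cand (signState x m) < y := by
      have := (abs_lt.mp h1).1; linarith
    rw [if_pos hc, if_pos hcy]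
  · exfalso; rw [hc, sub_self, abs_zero] at hy; linarith [abs_nonneg (y - x)]
  · have habs : |cand (signState x m) - x| = cand (signState x m) - x :=
      abs_of_pos (by linarith)
    have h1 : |y - x| < cand (signState x m) - x := habs ▸ hy
    have hyc : y < cand (signState x m) := by
      have := (abs_lt.mp h1).2; linarith
    rw [if_neg (not_lt.mpr hyc.le), if_pos hyc, if_neg (not_lt.mpr hc.le), if_pos hc]

end Cont

open Filter Topology in
/-- If a sequence of reals converging classically to a dyadic rational `x` has
infinitely many terms strictly above `x` and infinitely many terms strictly below `x`, then the
s-limit of the sign expansions equals the sign expansion of `x` itself. -/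
theorem slim_signExp_of_tendsto_dyadic_oscillating (r : ℕ → ℝ) (x : ℝ)
    (hconv : Tendsto r atTop (𝓝 x)) (hx : IsDyadic x)
    (habove : ∃ᶠ n in atTop, x < r n) (hbelow : ∃ᶠ n in atTop, r n < x) :
    slim (fun n => signExp (r n)) = signExp x := by
  have hterm := signState_terminates x hx
  set N := Nat.find hterm with hNdef
  have hcN : cand (signState x N) = x := Nat.find_spec hterm
  have hne : ∀ m < N, cand (signState x m) ≠ x := fun m hm => Nat.find_min hterm hm
  set S : Finset ℝ := insert 1 ((Finset.range N).image fun m => |cand (signState x m) - x|)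
    with hS
  have hSne : S.Nonempty := ⟨1, Finset.mem_insert_self _ _⟩
  set ε : ℝ := S.min' hSne with hεdef
  have hεpos : 0 < ε := by
    have hmem : ε ∈ S := S.min'_mem hSne
    rw [hS] at hmem
    rcases Finset.mem_insert.mp hmem with h1 | h2
    · rw [h1]; norm_num
    · obtain ⟨m, hm, hv⟩ := Finset.mem_image.mp h2
      rw [← hv]
      exact abs_pos.mpr (sub_ne_zero.mpr (hne m (Finset.mem_range.mp hm)))
  have hεle : ∀ m < N, ε ≤ |cand (signState x m) - x| := fun m hm =>
    S.min'_le _ (Finset.mem_insert_of_mem (Finset.mem_image_of_mem _ (Finset.mem_range.mpr hm)))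
  obtain ⟨L1, hL1⟩ := Metric.tendsto_atTop.mp hconv ε hεpos
  have hclose : ∀ l, L1 ≤ l → |r l - x| < ε := by
    intro l hl
    have := hL1 l hl
    rwa [Real.dist_eq] at this
  have hkey : ∀ l, L1 ≤ l → ∀ m ≤ N, signState (r l) m = signState x m := fun l hl =>
    signState_close x (r l) N (fun m hm => lt_of_lt_of_le (hclose l hl) (hεle m hm))
  have hkeyAt : ∀ l, L1 ≤ l → ∀ m < N, signAt (r l) m = signAt x m := fun l hl =>
    signAt_close x (r l) N (fun m hm => lt_of_lt_of_le (hclose l hl) (hεle m hm))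
  have hkeyN : ∀ l, L1 ≤ l → signAt (r l) N =
      (if x < r l then some true else if r l < x then some false else none) := by
    intro l hl
    rw [signAt_eq, hkey l hl N le_rfl, hcN]
  have hSome : ∀ m < N, (signAt x m).isSome := fun m hm => signAt_isSome_of_ne (hne m hm)
  funext γ
  rcases lt_or_ge γ (N : Ordinal) with hγ | hγ
  · -- γ corresponds to a natural number k < N
    have hγω : γ < Ordinal.omega0 := hγ.trans (Ordinal.nat_lt_omega0 N)
    obtain ⟨k, rfl⟩ := Ordinal.lt_omega0.mp hγω
    have hkN : k < N := by exact_mod_cast hγ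
    have hC : ∃ l0 : ℕ, ∀ m' ≤ (k : Ordinal), ∀ l, l0 ≤ l → ∀ l', l0 ≤ l' →
        signExp (r l) m' = signExp (r l') m' ∧ (signExp (r l) m').isSome := by
      refine ⟨L1, fun m' hm' l hl l' hl' => ?_⟩
      have hm'ω : m' < Ordinal.omega0 := lt_of_le_of_lt hm' (Ordinal.nat_lt_omega0 k)
      obtain ⟨j, rfl⟩ := Ordinal.lt_omega0.mp hm'ω
      have hjk : j ≤ k := by exact_mod_cast hm'
      have hjN : j < N := lt_of_le_of_lt hjk hkN
      rw [signExp_natCast, signExp_natCast, hkeyAt l hl j hjN, hkeyAt l' hl' j hjN]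
      exact ⟨rfl, hSome j hjN⟩
    rw [signExp_natCast]
    simp only [slim]
    rw [dif_pos hC]
    have hspec := hC.choose_spec (k : Ordinal) le_rfl hC.choose le_rfl
      (max hC.choose L1) (le_max_left _ _)
    rw [hspec.1, signExp_natCast, hkeyAt (max hC.choose L1) (le_max_right _ _) k hkN]
  · -- N ≤ γ : both sides are none
    have hx_none : signExp x γ = none := by
      rcases lt_or_ge γ Ordinal.omega0 with hω | hω
      · obtain ⟨k, rfl⟩ := Ordinal.lt_omega0.mp hω
        rw [signExp_natCast]
        exact signAt_none_of_freeze hcN (by exact_mod_cast hγ)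
      · exact signExp_of_omega_le x hω
    rw [hx_none]
    simp only [slim]
    rw [dif_neg]
    rintro ⟨l0, hP⟩
    obtain ⟨la, hla2, hla1⟩ :=
      (habove.and_eventually (Filter.eventually_ge_atTop (max l0 L1))).exists
    obtain ⟨lb, hlb2, hlb1⟩ :=
      (hbelow.and_eventually (Filter.eventually_ge_atTop (max l0 L1))).exists
    have h1 := (hP (N : Ordinal) hγ la (le_trans (le_max_left _ _) hla1)
      lb (le_trans (le_max_left _ _) hlb1)).1
    rw [signExp_natCast, signExp_natCast,
      hkeyN la (le_trans (le_max_right _ _) hla1), if_pos hla2,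
      hkeyN lb (le_trans (le_max_right _ _) hlb1), if_neg (not_lt.mpr hlb2.le),
      if_pos hlb2] at h1
    simp at h1
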